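/- Let ξ be a ranking function for the product automaton P with upper bound α = |X_P| − |F_P| + 1. If a state x ∈ X_P admits a finite event sequence s = s_0 s_1 ⋯ s_{n-1} ∈ Σ_P* along which the rank strictly decreases at every step and which ends in rank 0 — that is, ξ(x) > ξ(δ_P(x, s_0)) > ξ(δ_P(x, s_0 s_1)) > ⋯ > ξ(δ_P(x, s)) = 0 — then δ_P(x,s) ∈ F_P. More generally, any state y ∈ X_P with ξ(y) = 0 belongs to F_P, and from every state x with 0 < ξ(x) < α there exists a finite event sequence of length at most ξ(x) reaching a state in F_P. -/

import Mathlib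

/-- A deterministic finite automaton with partial transitions:
states `X`, events `E`, partial transition function `delta` (modeled with `Option`),
uncontrollable events `Eu` (the controllable ones being the complement),
accepting states `F`, and initial state `init`. -/
structure PAut (X E : Type*) [Fintype X] [DecidableEq X] [Fintype E] [DecidableEq E] where
  delta : X → E → Option X
  Eu : Finset E
  F : Finset X
  init : X

variable {X E : Type*} [Fintype X] [DecidableEq X] [Fintype E] [DecidableEq E]

namespace PAut

/-- `Σ_P(x)`: the events enabled (defined) at `x`. -/
def enabled (P : PAut X E) (x : X) : Finset E :=
  Finset.univ.filter fun σ => (P.delta x σ).isSome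

/-- `Σ_{P,u}(x) = Σ_P(x) ∩ Σ_{P,u}`. -/
def enabledU (P : PAut X E) (x : X) : Finset E := P.enabled x ∩ P.Eu

/-- `Σ_{P,c}(x) = Σ_P(x) ∩ Σ_{P,c}`. -/
def enabledC (P : PAut X E) (x : X) : Finset E := P.enabled x \ P.Eu

/-- `δ_P(x,σ)` as a total function; it agrees with `delta` on enabled events. -/
def dest (P : PAut X E) (x : X) (σ : E) : X := (P.delta x σ).getD x

/-- `suc_P(x) = { δ_P(x,σ) : σ ∈ Σ_P(x) }`. -/
def suc (P : PAut X E) (x : X) : Finset X := (P.enabled x).image (P.dest x)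

/-- Extension of `δ_P` to finite event sequences. -/
def deltaStar (P : PAut X E) (x : X) : List E → Option X
  | [] => some x
  | σ :: s => (P.delta x σ).bind fun y => P.deltaStar y s

/-- The upper bound `α = |X_P| − |F_P| + 1`. -/
def alpha (P : PAut X E) : ℕ := Fintype.card X - P.F.card + 1

/-- The indicator `I(x)`: `1` if `x ∉ F_P`, `0` if `x ∈ F_P`. -/
def ind (P : PAut X E) (x : X) : ℕ := if x ∈ P.F then 0 else 1

/-- `ξ` is a ranking function for `P`:
(1) `ξ x = 0 ↔ x ∈ F_P`;
(2) if no event is enabled at `x` then `ξ x = α`;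
if some event is enabled but no uncontrollable one
(equivalently, the set of enabled controllable events is nonempty and the set of
enabled uncontrollable events is empty) then
`ξ x = min (min_{σ ∈ Σ_{P,c}(x)} ξ(δ_P(x,σ)) + I x) α`;
otherwise (some uncontrollable event is enabled)
`ξ x = min (max_{σ ∈ Σ_{P,u}(x)} ξ(δ_P(x,σ)) + I x) α`. -/
def IsRanking (P : PAut X E) (ξ : X → ℕ) : Prop :=
  ∀ x : X,
    (ξ x = 0 ↔ x ∈ P.F) ∧
    (P.enabled x = ∅ → ξ x = P.alpha) ∧
    (∀ hne : (P.enabledC x).Nonempty, P.enabledU x = ∅ →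
      ξ x = min (((P.enabledC x).inf' hne fun σ => ξ (P.dest x σ)) + P.ind x) P.alpha) ∧
    (∀ hne : (P.enabledU x).Nonempty,
      ξ x = min (((P.enabledU x).sup' hne fun σ => ξ (P.dest x σ)) + P.ind x) P.alpha)

/-- `η` is a permissiveness function: `η 0 ≤ α`, `η` is nonincreasing,
and `η k̄ = 0` for some `k̄`. -/
def IsPerm (P : PAut X E) (η : ℕ → ℝ) : Prop :=
  η 0 ≤ (P.alpha : ℝ) ∧ (∀ k : ℕ, η (k + 1) ≤ η k) ∧ ∃ kb : ℕ, η kb = 0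

/-- `online(x,k) = { σ ∈ Σ_P(x) : ξ(δ_P(x,σ)) < max{ξ(x), η(k)} }`. -/
noncomputable def online (P : PAut X E) (ξ : X → ℕ) (η : ℕ → ℝ) (x : X) (k : ℕ) :
    Finset E :=
  (P.enabled x).filter fun σ => (ξ (P.dest x σ) : ℝ) < max (ξ x : ℝ) (η k)

end PAut


lemma PAut.delta_eq_of_enabled {P : PAut X E} {x : X} {σ : E}
    (h : σ ∈ P.enabled x) : P.delta x σ = some (P.dest x σ) := by
  simp only [PAut.enabled, Finset.mem_filter] at h
  obtain ⟨z, hz⟩ := Option.isSome_iff_exists.mp h.2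
  simp [PAut.dest, hz]

lemma PAut.rank_step {P : PAut X E} {ξ : X → ℕ} (hξ : P.IsRanking ξ) {x : X}
    (h0 : 0 < ξ x) (hα : ξ x < P.alpha) :
    ∃ σ : E, σ ∈ P.enabled x ∧ ξ (P.dest x σ) < ξ x := by
  obtain ⟨h1, h2, h3, h4⟩ := hξ x
  have hxF : x ∉ P.F := fun h => by have := h1.2 h; omega
  have hind : P.ind x = 1 := by simp [PAut.ind, hxF]
  by_cases hU : (P.enabledU x).Nonempty
  · have heq := h4 hU
    rw [hind] at heq
    obtain ⟨σ, hσ, hmax⟩ := Finset.exists_mem_eq_sup' hU fun σ => ξ (P.dest x σ)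
    have hσen : σ ∈ P.enabled x := Finset.mem_of_mem_inter_left hσ
    exact ⟨σ, hσen, by omega⟩
  · have hUe : P.enabledU x = ∅ := Finset.not_nonempty_iff_eq_empty.mp hU
    have hene : P.enabled x ≠ ∅ := fun h => by have := h2 h; omega
    have hC : (P.enabledC x).Nonempty := by
      obtain ⟨σ, hσ⟩ := Finset.nonempty_iff_ne_empty.mpr hene
      refine ⟨σ, Finset.mem_sdiff.mpr ⟨hσ, fun hEu => ?_⟩⟩
      have : σ ∈ P.enabledU x := Finset.mem_inter.mpr ⟨hσ, hEu⟩
      simp [hUe] at this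
    have heq := h3 hC hUe
    rw [hind] at heq
    obtain ⟨σ, hσ, hmin⟩ := Finset.exists_mem_eq_inf' hC fun σ => ξ (P.dest x σ)
    have hσen : σ ∈ P.enabled x := (Finset.mem_sdiff.mp hσ).1
    exact ⟨σ, hσen, by omega⟩

lemma PAut.reach_acc {P : PAut X E} {ξ : X → ℕ} (hξ : P.IsRanking ξ) :
    ∀ n (x : X), ξ x ≤ n → 0 < ξ x → ξ x < P.alpha →
      ∃ (s : List E) (y : X), s.length ≤ ξ x ∧ P.deltaStar x s = some y ∧ y ∈ P.F := by
  intro n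
  induction n with
  | zero => intro x h h0 _; omega
  | succ n ih =>
    intro x h h0 hα
    obtain ⟨σ, hσen, hlt⟩ := PAut.rank_step hξ h0 hα
    have hδ := PAut.delta_eq_of_enabled hσen
    set z := P.dest x σ with hz
    by_cases hz0 : ξ z = 0
    · exact ⟨[σ], z, by simp; omega, by simp [PAut.deltaStar, hδ], ((hξ z).1).mp hz0⟩
    · obtain ⟨s, y, hlen, hds, hyF⟩ := ih z (by omega) (by omega) (by omega)
      exact ⟨σ :: s, y, by simp; omega, by simp [PAut.deltaStar, hδ, hds], hyF⟩

/-- a strictly rank-decreasing finite sequence ending in rank `0`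
ends in an accepting state; any state of rank `0` is accepting; and from any
state with `0 < ξ x < α` an accepting state is reachable in at most `ξ x` steps. -/
theorem stmt_10 {X E : Type*} [Fintype X] [DecidableEq X] [Fintype E] [DecidableEq E]
    (P : PAut X E) (ξ : X → ℕ) (hξ : P.IsRanking ξ) :
    (∀ (x y : X) (s : List E),
      P.deltaStar x s = some y → ξ y = 0 →
      (∀ i < s.length, ∀ a b : X,
        P.deltaStar x (s.take i) = some a →
        P.deltaStar x (s.take (i + 1)) = some b → ξ b < ξ a) →
      y ∈ P.F) ∧
    (∀ y : X, ξ y = 0 → y ∈ P.F) ∧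
    (∀ x : X, 0 < ξ x → ξ x < P.alpha →
      ∃ (s : List E) (y : X), s.length ≤ ξ x ∧ P.deltaStar x s = some y ∧ y ∈ P.F) := by
  refine ⟨fun x y s _ hy0 _ => ((hξ y).1).mp hy0, fun y hy0 => ((hξ y).1).mp hy0,
    fun x h0 hα => PAut.reach_acc hξ (ξ x) x le_rfl h0 hα⟩
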